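/- Let G be a group-groupoid. The functors Γ : GGdOp(G) → GGdCov(G), sending an action (M, w) to the covering p : G ⋉ M → G, and Φ : GGdCov(G) → GGdOp(G), sending a covering p : H → G to the induced action of G on H₀ via p₀, form an equivalence of categories: Φ ∘ Γ is (naturally isomorphic to) the identity on GGdOp(G), and Γ ∘ Φ is naturally isomorphic to the identity on GGdCov(G) via the maps T_p : H → G ⋉ H₀, h ↦ (p(h), α(h)). -/

import Mathlib

/-- A groupoid, given algebraically: a set of objects `O` and a set of morphisms `M`
with source, target, identity-assigning, (totalized) composition and inversion maps.
`comp b a` is the composite `b ∘ a`, only constrained when `src b = tgt a`. -/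
structure Gpd (O M : Type) where
  src : M → O
  tgt : M → O
  idm : O → M
  comp : M → M → M
  inv : M → M
  src_idm : ∀ x, src (idm x) = x
  tgt_idm : ∀ x, tgt (idm x) = x
  src_comp : ∀ b a, src b = tgt a → src (comp b a) = src a
  tgt_comp : ∀ b a, src b = tgt a → tgt (comp b a) = tgt b
  comp_assoc : ∀ c b a, src c = tgt b → src b = tgt a →
    comp c (comp b a) = comp (comp c b) a
  comp_idm : ∀ a, comp a (idm (src a)) = a
  idm_comp : ∀ a, comp (idm (tgt a)) a = a
  src_inv : ∀ a, src (inv a) = tgt a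
  tgt_inv : ∀ a, tgt (inv a) = src a
  inv_comp : ∀ a, comp (inv a) a = idm (src a)
  comp_inv : ∀ a, comp a (inv a) = idm (tgt a)

/-- A group-groupoid (a group object in groupoids): the objects and morphisms are
groups (written additively, not necessarily commutative) and the structure maps
are group homomorphisms; the interchange law holds. -/
structure GroupGpd (O M : Type) [AddGroup O] [AddGroup M] extends Gpd O M where
  src_add : ∀ a b, src (a + b) = src a + src b
  tgt_add : ∀ a b, tgt (a + b) = tgt a + tgt b
  idm_add : ∀ x y, idm (x + y) = idm x + idm y
  interchange : ∀ a b c d, src b = tgt a → src d = tgt c →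
    comp b a + comp d c = comp (b + d) (a + c)

/-- A morphism of group-groupoids: a functor between the underlying groupoids that is
a group homomorphism on morphisms and on objects. -/
structure GGHom {O M O' M' : Type} [AddGroup O] [AddGroup M] [AddGroup O'] [AddGroup M']
    (S : GroupGpd O M) (T : GroupGpd O' M') where
  f : M → M'
  f0 : O → O'
  map_src : ∀ a, T.src (f a) = f0 (S.src a)
  map_tgt : ∀ a, T.tgt (f a) = f0 (S.tgt a)
  map_idm : ∀ x, f (S.idm x) = T.idm (f0 x)
  map_comp : ∀ b a, S.src b = S.tgt a → f (S.comp b a) = T.comp (f b) (f a)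
  map_add : ∀ a b, f (a + b) = f a + f b
  map_add0 : ∀ x y, f0 (x + y) = f0 x + f0 y

/-- `p : H → G` is a covering morphism if it restricts to a bijection on each star. -/
def GGHom.IsCovering {O M O' M' : Type} [AddGroup O] [AddGroup M] [AddGroup O'] [AddGroup M']
    {S : GroupGpd O M} {T : GroupGpd O' M'} (p : GGHom S T) : Prop :=
  ∀ x : O, Set.BijOn p.f {a | S.src a = x} {b | T.src b = p.f0 x}

/-- The morphism group of the action groupoid `G ⋉ M`: the subgroup
`{(a,x) : α(a) = w(x)}` of `G × M`. -/
def actionSub {O MG M : Type} [AddGroup O] [AddGroup MG] [AddGroup M]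
    (S : GroupGpd O MG) (w : M →+ O) : AddSubgroup (MG × M) where
  carrier := {q | S.src q.1 = w q.2}
  zero_mem' := by
    have h := S.src_add 0 0
    rw [add_zero] at h
    have h0 : S.src (0 : MG) = 0 := left_eq_add.mp h
    simp [h0]
  add_mem' := by
    intro a b ha hb
    simp only [Set.mem_setOf_eq] at *
    show S.src (a.1 + b.1) = w (a.2 + b.2)
    rw [S.src_add, ha, hb, map_add]
  neg_mem' := by
    intro a ha
    simp only [Set.mem_setOf_eq] at *
    have h : S.src (-a.1) + S.src a.1 = 0 := by
      rw [← S.src_add, neg_add_cancel]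
      have h2 := S.src_add 0 0
      rw [add_zero] at h2
      exact (left_eq_add.mp h2)
    have : S.src (-a.1) = -S.src a.1 := eq_neg_of_add_eq_zero_left h
    show S.src (-a.1) = w (-a.2)
    rw [this, ha, map_neg]

section Aux
variable {O MG M : Type} [AddGroup O] [AddGroup MG] [AddGroup M]
variable (G : GroupGpd O MG) (w : M →+ O) (act : MG → M → M)

theorem mk_mem_actionSub {a : MG} {x : M} (h : G.src a = w x) :
    (a, x) ∈ actionSub G w := h

variable (h1 : ∀ (a : MG) (x : M), G.src a = w x → w (act a x) = G.tgt a)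
variable (h2 : ∀ (a b : MG) (x : M), G.src a = w x → G.src b = w (act a x) →
        act b (act a x) = act (G.comp b a) x)
variable (h3 : ∀ x : M, act (G.idm (w x)) x = x)
variable (h4 : ∀ (a b : MG) (x y : M), G.src a = w x → G.src b = w y →
        act b y + act a x = act (b + a) (y + x))

include h1 in
theorem comp_cond (q r : ↥(actionSub G w)) (h : q.1.2 = act r.1.1 r.1.2) :
    G.src q.1.1 = G.tgt r.1.1 := by
  rw [q.2, h, h1 _ _ r.2]

open Classical in
noncomputable def aComp (q r : ↥(actionSub G w)) : ↥(actionSub G w) :=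
  if h : q.1.2 = act r.1.1 r.1.2 then
    ⟨(G.comp q.1.1 r.1.1, r.1.2), mk_mem_actionSub G w
      (by rw [G.src_comp _ _ (comp_cond G w act h1 q r h), r.2])⟩
  else q

include h1

theorem aComp_val (q r : ↥(actionSub G w)) (h : q.1.2 = act r.1.1 r.1.2) :
    (aComp G w act h1 q r : MG × M) = (G.comp q.1.1 r.1.1, r.1.2) := by
  unfold aComp; rw [dif_pos h]

theorem aComp_fst (q r : ↥(actionSub G w)) (h : q.1.2 = act r.1.1 r.1.2) :
    (aComp G w act h1 q r).1.1 = G.comp q.1.1 r.1.1 :=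
  congrArg Prod.fst (aComp_val G w act h1 q r h)

theorem aComp_snd (q r : ↥(actionSub G w)) (h : q.1.2 = act r.1.1 r.1.2) :
    (aComp G w act h1 q r).1.2 = r.1.2 := by
  have := aComp_val G w act h1 q r h
  rw [Prod.ext_iff] at this
  exact this.2

include h2 h3 h4

noncomputable def actGpd : GroupGpd M ↥(actionSub G w) where
  src q := q.1.2
  tgt q := act q.1.1 q.1.2
  idm x := ⟨(G.idm (w x), x), mk_mem_actionSub G w (G.src_idm (w x))⟩
  comp := aComp G w act h1
  inv q := ⟨(G.inv q.1.1, act q.1.1 q.1.2), mk_mem_actionSub G w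
    (by rw [G.src_inv, h1 _ _ q.2])⟩
  src_idm x := rfl
  tgt_idm x := h3 x
  src_comp b a h := aComp_snd G w act h1 b a h
  tgt_comp b a h := by
    have h' : b.1.2 = act a.1.1 a.1.2 := h
    show act (aComp G w act h1 b a).1.1 (aComp G w act h1 b a).1.2 = act b.1.1 b.1.2
    rw [aComp_fst G w act h1 b a h', aComp_snd G w act h1 b a h',
      ← h2 _ _ _ a.2 (by rw [← h', ← b.2]), ← h']
  comp_assoc c b a hcb hba := by
    apply Subtype.ext
    have hba' : b.1.2 = act a.1.1 a.1.2 := hba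
    have hcb' : c.1.2 = act b.1.1 b.1.2 := hcb
    have key : act b.1.1 (act a.1.1 a.1.2) = act (G.comp b.1.1 a.1.1) a.1.2 :=
      h2 _ _ _ a.2 (by rw [← hba', ← b.2])
    have c1 : c.1.2 = act (aComp G w act h1 b a).1.1 (aComp G w act h1 b a).1.2 := by
      rw [aComp_fst G w act h1 b a hba', aComp_snd G w act h1 b a hba',
        ← key, ← hba', hcb']
    have c2 : (aComp G w act h1 c b).1.2 = act a.1.1 a.1.2 := by
      rw [aComp_snd G w act h1 c b hcb', hba']
    rw [aComp_val G w act h1 _ _ c1, aComp_val G w act h1 _ _ c2,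
      aComp_fst G w act h1 b a hba', aComp_snd G w act h1 b a hba',
      aComp_fst G w act h1 c b hcb',
      G.comp_assoc _ _ _ (comp_cond G w act h1 c b hcb') (comp_cond G w act h1 b a hba')]
  comp_idm a := by
    apply Subtype.ext
    have c1 : a.1.2 = act (G.idm (w a.1.2)) a.1.2 := (h3 a.1.2).symm
    rw [aComp_val G w act h1 _ _ c1]
    show (G.comp a.1.1 (G.idm (w a.1.2)), a.1.2) = (a.1.1, a.1.2)
    rw [← a.2, G.comp_idm]
  idm_comp a := by
    apply Subtype.ext
    have c1 : (act a.1.1 a.1.2 : M) = act a.1.1 a.1.2 := rfl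
    rw [aComp_val G w act h1 _ _ c1]
    show (G.comp (G.idm (w (act a.1.1 a.1.2))) a.1.1, a.1.2) = (a.1.1, a.1.2)
    rw [h1 _ _ a.2, G.idm_comp]
  src_inv a := rfl
  tgt_inv a := by
    show act (G.inv a.1.1) (act a.1.1 a.1.2) = a.1.2
    rw [h2 _ _ _ a.2 (by rw [G.src_inv, h1 _ _ a.2]), G.inv_comp, a.2, h3]
  inv_comp a := by
    apply Subtype.ext
    have c1 : (act a.1.1 a.1.2 : M) = act a.1.1 a.1.2 := rfl
    rw [aComp_val G w act h1 _ _ c1]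
    show (G.comp (G.inv a.1.1) a.1.1, a.1.2) = (G.idm (w a.1.2), a.1.2)
    rw [G.inv_comp, a.2]
  comp_inv a := by
    apply Subtype.ext
    have c1 : a.1.2 = act (G.inv a.1.1) (act a.1.1 a.1.2) := by
      rw [h2 _ _ _ a.2 (by rw [G.src_inv, h1 _ _ a.2]), G.inv_comp, a.2, h3]
    rw [aComp_val G w act h1 _ _ c1]
    show (G.comp a.1.1 (G.inv a.1.1), act a.1.1 a.1.2)
      = (G.idm (w (act a.1.1 a.1.2)), act a.1.1 a.1.2)
    rw [G.comp_inv, h1 _ _ a.2]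
  src_add a b := rfl
  tgt_add a b := by
    show act (a.1.1 + b.1.1) (a.1.2 + b.1.2) = act a.1.1 a.1.2 + act b.1.1 b.1.2
    rw [← h4 _ _ _ _ b.2 a.2]
  idm_add x y := by
    apply Subtype.ext
    show (G.idm (w (x + y)), x + y) = ((G.idm (w x), x) + (G.idm (w y), y) : MG × M)
    rw [map_add, G.idm_add]
    rfl
  interchange a b c d hba hdc := by
    apply Subtype.ext
    have hba' : b.1.2 = act a.1.1 a.1.2 := hba
    have hdc' : d.1.2 = act c.1.1 c.1.2 := hdc
    have key : act a.1.1 a.1.2 + act c.1.1 c.1.2 = act (a.1.1 + c.1.1) (a.1.2 + c.1.2) :=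
      h4 _ _ _ _ c.2 a.2
    have c1 : (b + d : ↥(actionSub G w)).1.2
        = act ((a + c : ↥(actionSub G w)).1.1) ((a + c : ↥(actionSub G w)).1.2) := by
      show b.1.2 + d.1.2 = act (a.1.1 + c.1.1) (a.1.2 + c.1.2)
      rw [hba', hdc', key]
    show (aComp G w act h1 b a : MG × M) + (aComp G w act h1 d c : MG × M) = _
    rw [aComp_val G w act h1 _ _ hba', aComp_val G w act h1 _ _ hdc',
      aComp_val G w act h1 _ _ c1]
    show (G.comp b.1.1 a.1.1 + G.comp d.1.1 c.1.1, a.1.2 + c.1.2)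
      = (G.comp (b.1.1 + d.1.1) (a.1.1 + c.1.1), a.1.2 + c.1.2)
    rw [G.interchange _ _ _ _ (comp_cond G w act h1 b a hba') (comp_cond G w act h1 d c hdc')]

noncomputable def actPi : GGHom (actGpd G w act h1 h2 h3 h4) G where
  f q := q.1.1
  f0 := w
  map_src q := q.2
  map_tgt q := (h1 _ _ q.2).symm
  map_idm _ := rfl
  map_comp b a h := aComp_fst G w act h1 b a h
  map_add _ _ := rfl
  map_add0 := map_add w

theorem actPi_cov : (actPi G w act h1 h2 h3 h4).IsCovering := by
  intro x
  refine ⟨fun q hq => ?_, fun q hq q' hq' hqq => ?_, fun b hb => ?_⟩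
  · show G.src q.1.1 = w x
    rw [q.2]
    exact congrArg w hq
  · apply Subtype.ext
    have : q.1.2 = q'.1.2 := by
      rw [show q.1.2 = x from hq, show q'.1.2 = x from hq']
    exact Prod.ext hqq this
  · exact ⟨⟨(b, x), mk_mem_actionSub G w hb⟩, rfl, rfl⟩

end Aux
/-- For a group-groupoid `G`, the functor `Γ` (sending an action
`(M,w)` to the covering `G ⋉ M → G`) and the functor `Φ` (sending a covering
`p : H → G` to the induced action of `G` on `H₀` via `p₀`) form an equivalence of
the category of actions of `G` on groups with the category of coverings of `G`:

* (`Φ ∘ Γ` is the identity) for every action `(M, w, act)`, the projection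
  `π : G ⋉ M → G` is a covering and the action induced from it is exactly `act`;
* (`Γ ∘ Φ ≅ id` via `T_p`) for every covering `p : H → G`, the map
  `T_p : h ↦ (p(h), α(h))` is a bijective morphism of group-groupoids from `H`
  to `G ⋉ H₀` over `G`, and `T` is natural in `p`. -/
theorem stmt10 {O MG : Type} [AddGroup O] [AddGroup MG] (G : GroupGpd O MG) :
    -- Φ ∘ Γ is the identity on actions:
    (∀ (M : Type) (_ : AddGroup M) (w : M →+ O) (act : MG → M → M),
      (∀ (a : MG) (x : M), G.src a = w x → w (act a x) = G.tgt a) →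
      (∀ (a b : MG) (x : M), G.src a = w x → G.src b = w (act a x) →
        act b (act a x) = act (G.comp b a) x) →
      (∀ x : M, act (G.idm (w x)) x = x) →
      (∀ (a b : MG) (x y : M), G.src a = w x → G.src b = w y →
        act b y + act a x = act (b + a) (y + x)) →
      ∃ (T : GroupGpd M ↥(actionSub G w)) (π : GGHom T G),
        (∀ q : ↥(actionSub G w), T.src q = q.1.2) ∧
        (∀ q : ↥(actionSub G w), T.tgt q = act q.1.1 q.1.2) ∧
        π.f = (fun q : ↥(actionSub G w) => q.1.1) ∧ π.f0 = ⇑w ∧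
        π.IsCovering ∧
        -- the action induced from the covering `π` is the original one:
        (∀ (a : MG) (x : M), G.src a = w x →
          ∀ m : ↥(actionSub G w), π.f m = a → T.src m = x → T.tgt m = act a x)) ∧
    -- Γ ∘ Φ is naturally isomorphic to the identity via the maps T_p:
    (∀ (OH MH : Type) (_ : AddGroup OH) (_ : AddGroup MH)
      (H : GroupGpd OH MH) (p : GGHom H G), p.IsCovering →
      ∀ (w : OH →+ O), ⇑w = p.f0 →
      ∀ ℓ : MG → OH → MH,
      (∀ (a : MG) (x : OH), G.src a = p.f0 x →
          p.f (ℓ a x) = a ∧ H.src (ℓ a x) = x) →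
      (∀ (a : MG) (x : OH) (m : MH), G.src a = p.f0 x →
          p.f m = a → H.src m = x → m = ℓ a x) →
      ∀ T : MH → ↥(actionSub G w),
      (∀ h : MH, (T h : MG × OH) = (p.f h, H.src h)) →
      Function.Bijective T ∧
      (∀ h h' : MH, T (h + h') = T h + T h') ∧
      (∀ h : MH, (T h).1.1 = p.f h) ∧
      (∀ b a : MH, H.src b = H.tgt a →
        ((T (H.comp b a)) : MG × OH) = (G.comp (p.f b) (p.f a), H.src a)) ∧
      (∀ x : OH, ((T (H.idm x)) : MG × OH) = (G.idm (w x), x)) ∧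
      (∀ q : ↥(actionSub G w), T (ℓ q.1.1 q.1.2) = q)) := by
  constructor
  · intro M _ w act h1' h2' h3' h4'
    have h2 : ∀ (a b : MG) (x : M), G.src a = w x → G.src b = w (act a x) →
        act b (act a x) = act (G.comp b a) x := fun a b x ha hb => h2' a b x ha hb
    refine ⟨actGpd G w act h1' h2 h3' h4', actPi G w act h1' h2 h3' h4',
      fun q => rfl, fun q => rfl, rfl, rfl, actPi_cov G w act h1' h2 h3' h4', ?_⟩
    intro a x _ m hfa hsx
    show act m.1.1 m.1.2 = act a x
    rw [show m.1.1 = a from hfa, show m.1.2 = x from hsx]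
  · intro OH MH _ _ H p hcov w hw ℓ hl1 hl2 T hT
    have hTl : ∀ q : ↥(actionSub G w), T (ℓ q.1.1 q.1.2) = q := by
      intro q
      have hq : G.src q.1.1 = p.f0 q.1.2 := by rw [q.2, hw]
      obtain ⟨hf, hs⟩ := hl1 q.1.1 q.1.2 hq
      apply Subtype.ext
      rw [hT, hf, hs]
    have hbij : Function.Bijective T := by
      constructor
      · intro h h' hhh
        have h1 : (p.f h, H.src h) = ((p.f h', H.src h') : MG × OH) := by
          rw [← hT, ← hT, hhh]
        have hfs : p.f h = p.f h' := congrArg Prod.fst h1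
        have hss : H.src h = H.src h' := congrArg Prod.snd h1
        exact (hcov (H.src h)).injOn rfl hss.symm hfs
      · intro q
        exact ⟨ℓ q.1.1 q.1.2, hTl q⟩
    refine ⟨hbij, ?_, fun h => by rw [hT], ?_, ?_, hTl⟩
    · intro h h'
      apply Subtype.ext
      show (T (h + h') : MG × OH) = (T h : MG × OH) + (T h' : MG × OH)
      rw [hT, hT, hT, p.map_add, H.src_add]
      rfl
    · intro b a hba
      rw [hT, p.map_comp b a hba, H.src_comp b a hba]
    · intro x
      rw [hT, p.map_idm, H.src_idm, hw]
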